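/- Let $\mathcal{N}$ be a proper submodule of a finitely generated module $\mathcal{M}$ over a Noetherian commutative ring $R$, let $P_1, \ldots, P_r$ be the minimal primes over $I = \mathrm{Ann}(\mathcal{M}/\mathcal{N})$ with $r \geq 2$, and let $s_1, \ldots, s_r$ be a system of separators ($s_i \notin P_i$, $s_i \in P_j$ for $j \neq i$). Set $Q_i = \mathcal{N} : s_i^\infty$ and choose $k_i$ with $Q_i = \mathcal{N} : s_i^{k_i}$. Then $\mathcal{N} = Q_1 \cap \cdots \cap Q_r \cap (\mathcal{N} + \langle s_1^{k_1}, \ldots, s_r^{k_r}\rangle \mathcal{M})$. -/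

import Mathlib

open Pointwise

/-- Pseudo-primary decomposition (module version, Shimoyama–Yokoyama). -/
theorem pseudo_primary_decomposition (R : Type*) [CommRing R] [IsNoetherianRing R]
    (M : Type*) [AddCommGroup M] [Module R M] [Module.Finite R M]
    (N : Submodule R M) (hN : N ≠ ⊤)
    (r : ℕ) (hr : 2 ≤ r) (P : Fin r → Ideal R)
    (hmin : ∀ i, P i ∈ (N.colon ⊤).minimalPrimes)
    (hall : ∀ Q ∈ (N.colon ⊤).minimalPrimes, ∃ i, Q = P i)
    (s : Fin r → R) (hsep : ∀ i, s i ∉ P i ∧ ∀ j, j ≠ i → s i ∈ P j)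
    (k : Fin r → ℕ)
    (hk : ∀ i, ∀ f : M, (∃ j : ℕ, s i ^ j • f ∈ N) ↔ s i ^ k i • f ∈ N) :
    N = (⨅ i, N.comap (LinearMap.lsmul R M (s i ^ k i))) ⊓
        (N ⊔ ⨆ i, s i ^ k i • (⊤ : Submodule R M)) := by
  -- For i ≠ j, s i * s j lies in every minimal prime of N.colon ⊤, hence in its radical.
  have hrad : ∀ i j : Fin r, j ≠ i → ∃ n : ℕ, ∀ x : M, ((s i * s j) ^ n) • x ∈ N := by
    intro i j hij
    have hmem : s i * s j ∈ (N.colon ⊤).radical := by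
      rw [← Ideal.sInf_minimalPrimes, Ideal.mem_sInf]
      intro Q hQ
      obtain ⟨l, rfl⟩ := hall Q hQ
      by_cases hl : l = i
      · subst hl
        exact Ideal.mul_mem_left _ _ ((hsep j).2 _ (Ne.symm hij))
      · exact Ideal.mul_mem_right _ _ ((hsep i).2 l hl)
    obtain ⟨n, hn⟩ := hmem
    exact ⟨n, fun x => Submodule.mem_colon.mp hn x trivial⟩
  -- Key: for i ≠ j, a fixed power of s i kills any element of s j ^ k j • ⊤ modulo N.
  have key : ∀ i j : Fin r, j ≠ i → ∃ n : ℕ, ∀ w ∈ s j ^ k j • (⊤ : Submodule R M),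
      s i ^ n • w ∈ N := by
    intro i j hij
    obtain ⟨n, hn⟩ := hrad i j hij
    refine ⟨n, fun w hw => ?_⟩
    obtain ⟨m, -, rfl⟩ := Submodule.mem_map.mp hw
    have h1 : s j ^ n • (s i ^ n • m) ∈ N := by
      have := hn m
      rwa [mul_pow, mul_smul, smul_comm] at this
    have h2 : s j ^ k j • (s i ^ n • m) ∈ N := (hk j _).mp ⟨n, h1⟩
    simpa [DistribSMul.toLinearMap_apply, smul_comm (s i ^ n)] using h2
  -- choose uniform exponents
  choose nn hnn using key
  apply le_antisymm
  · refine le_inf (le_iInf fun i => fun x hx => ?_) le_sup_left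
    simpa using N.smul_mem (s i ^ k i) hx
  · intro x hx
    rw [Submodule.mem_inf] at hx
    obtain ⟨hx1, hx2⟩ := hx
    simp only [Submodule.mem_iInf, Submodule.mem_comap, LinearMap.lsmul_apply] at hx1
    obtain ⟨y, hy, z, hz, rfl⟩ := Submodule.mem_sup.mp hx2
    obtain ⟨f, hf, hfz⟩ := (Submodule.mem_iSup_iff_exists_finsupp _ z).mp hz
    have hsum : z = ∑ j : Fin r, f j := by
      rw [← hfz, Finsupp.sum_fintype]
      intro; rfl
    -- show each f i ∈ N
    have hfi : ∀ i, f i ∈ N := by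
      intro i
      -- uniform exponent over j ≠ i
      set K : ℕ := Finset.univ.sup (fun j => if h : j = i then 0 else nn i j h) with hK
      have hkill : ∀ j, j ≠ i → s i ^ K • f j ∈ N := by
        intro j hj
        have hle : nn i j hj ≤ K := by
          have := Finset.le_sup (f := fun j => if h : j = i then 0 else nn i j h)
            (Finset.mem_univ j)
          simpa [hj] using this
        have h0 : s i ^ nn i j hj • f j ∈ N := hnn i j hj _ (hf j)
        have heq : s i ^ K • f j = s i ^ (K - nn i j hj) • s i ^ nn i j hj • f j := by
          rw [← mul_smul, ← pow_add, Nat.sub_add_cancel hle]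
        rw [heq]; exact N.smul_mem _ h0
      -- s i ^ (K + k i) • f i ∈ N
      have hx' : s i ^ (K + k i) • (y + z) ∈ N := by
        have h := hx1 i
        have heq : s i ^ (K + k i) • (y + z) = s i ^ K • s i ^ k i • (y + z) := by
          rw [← mul_smul, ← pow_add, add_comm K]
        rw [heq]; exact N.smul_mem _ h
      have hgi : s i ^ (K + k i) • f i ∈ N := by
        have heq : f i = (y + z) - y - ∑ j ∈ Finset.univ.erase i, f j := by
          rw [hsum, ← Finset.add_sum_erase _ _ (Finset.mem_univ i)]
          abel
        rw [heq, smul_sub, smul_sub, Finset.smul_sum]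
        refine N.sub_mem (N.sub_mem hx' (N.smul_mem _ hy)) (Submodule.sum_mem _ ?_)
        intro j hj
        have hjne : j ≠ i := (Finset.mem_erase.mp hj).1
        have heq : s i ^ (K + k i) • f j = s i ^ k i • s i ^ K • f j := by
          rw [← mul_smul, ← pow_add, add_comm]
        rw [heq]; exact N.smul_mem _ (hkill j hjne)
      -- f i = s i ^ k i • m, conclude via hk
      obtain ⟨m, -, hm⟩ := Submodule.mem_map.mp (hf i)
      have hm' : s i ^ k i • m = f i := by
        simpa [DistribSMul.toLinearMap_apply] using hm
      have : s i ^ (K + k i + k i) • m ∈ N := by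
        have : s i ^ (K + k i) • s i ^ k i • m ∈ N := by rw [hm']; exact hgi
        rwa [← mul_smul, ← pow_add] at this
      have := (hk i m).mp ⟨_, this⟩
      rwa [hm'] at this
    rw [hsum]
    exact N.add_mem hy (Submodule.sum_mem _ fun j _ => hfi j)
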